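/- Let T be a finite type, let k be a positive natural number, let F be a downward-closed k-extendible system of finsets of T, and let f be the unweighted rank function of F. Then for every decision tree 𝒯 over T, adap(𝒯, f) ≤ 2k · alg(𝒯, f). (Theorem 4.1: the adaptivity gap for an unweighted rank function of a k-extendible system is at most 2k.) -/
import Mathlib


open Finset

/-- A decision tree over a finite type `T`: either a leaf, or a node with a
probability mass function `μ : T → ℝ` and a child tree for each type `t : T`. -/
inductive DTree (T : Type*) where
  | leaf : DTree T
  | node : (T → ℝ) → (T → DTree T) → DTree T

/-- All distributions appearing in the tree are probability mass functions. -/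
def DTree.valid {T : Type*} [Fintype T] : DTree T → Prop
  | .leaf => True
  | .node μ c => (∀ t, 0 ≤ μ t) ∧ (∑ t, μ t) = 1 ∧ ∀ t, (c t).valid

/-- Contraction `f_S(A) = f(S ∪ A) − f(S)`. -/
def contract {T : Type*} [DecidableEq T] (f : Finset T → ℝ) (S : Finset T) :
    Finset T → ℝ :=
  fun A => f (S ∪ A) - f S

/-- Adaptive value: `adap(leaf, f) = 0`,
`adap(node μ c, f) = E_{I∼μ}[ f({I}) + adap(c(I), f_{{I}}) ]`. -/
noncomputable def adap {T : Type*} [Fintype T] [DecidableEq T] :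
    DTree T → (Finset T → ℝ) → ℝ
  | .leaf, _ => 0
  | .node μ c, f => ∑ t, μ t * (f {t} + adap (c t) (contract f {t}))

/-- Random-walk non-adaptive value: `alg(leaf, f) = 0`,
`alg(node μ c, f) = E_{I∼μ} E_{R∼μ}[ f({R}) + alg(c(I), f_{{R}}) ]`. -/
noncomputable def alg {T : Type*} [Fintype T] [DecidableEq T] :
    DTree T → (Finset T → ℝ) → ℝ
  | .leaf, _ => 0
  | .node μ c, f => ∑ i, ∑ r, μ i * μ r * (f {r} + alg (c i) (contract f {r}))

/-- Downward-closed family of finsets: contains `∅` and all subsets of members. -/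
def DownwardClosed {T : Type*} (F : Finset (Finset T)) : Prop :=
  ∅ ∈ F ∧ ∀ B ∈ F, ∀ A ⊆ B, A ∈ F

/-- `k`-extendible system: for every `A ⊆ B ∈ F` and element `e` with
`A ∪ {e} ∈ F`, some `Z ⊆ B \ A` with `|Z| ≤ k` has `(B \ Z) ∪ {e} ∈ F`. -/
def KExtendible {T : Type*} [DecidableEq T] (k : ℕ) (F : Finset (Finset T)) : Prop :=
  ∀ A B : Finset T, A ⊆ B → B ∈ F → ∀ e : T, A ∪ {e} ∈ F →
    ∃ Z ⊆ B \ A, Z.card ≤ k ∧ (B \ Z) ∪ {e} ∈ F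

/-- Unweighted rank function `f(A) = max_{B ∈ F} |A ∩ B|` (as a real number). -/
noncomputable def urank {T : Type*} [DecidableEq T] (F : Finset (Finset T))
    (A : Finset T) : ℝ :=
  ((F.sup fun B => (A ∩ B).card : ℕ) : ℝ)

/-- Weighted rank function `f(A) = max_{B ∈ F} Σ_{t ∈ A ∩ B} w(t)`
(for a nonempty family; any downward-closed family is nonempty). -/
noncomputable def wrank {T : Type*} [DecidableEq T] (F : Finset (Finset T))
    (w : T → ℝ) (A : Finset T) : ℝ :=
  if h : F.Nonempty then F.sup' h (fun B => ∑ t ∈ A ∩ B, w t) else 0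

open Classical in
/-- Unweighted class rank function
`f_j(A) = max_{B ∈ F} |{t ∈ A ∩ B : 2^{j−1} < w(t) ≤ 2^j}|` (as a real number). -/
noncomputable def classRank {T : Type*} [DecidableEq T] (F : Finset (Finset T))
    (w : T → ℝ) (j : ℤ) (A : Finset T) : ℝ :=
  ((F.sup fun B =>
      ((A ∩ B).filter fun t => (2:ℝ)^(j-1) < w t ∧ w t ≤ (2:ℝ)^j).card : ℕ) : ℝ)

/-! ### Auxiliary machinery for the proof of Theorem 4.1 -/

section Aux

open Classical

variable {T : Type*} [DecidableEq T]

/- Basic facts about `contract`. -/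
lemma contract_apply (f : Finset T → ℝ) (S X : Finset T) :
    contract f S X = f (S ∪ X) - f S := rfl

lemma contract_contract (f : Finset T → ℝ) (S S' : Finset T) :
    contract (contract f S) S' = contract f (S ∪ S') := by
  funext X
  simp only [contract]
  rw [Finset.union_assoc]
  ring

lemma contract_empty (f : Finset T → ℝ) (hf : f ∅ = 0) : contract f ∅ = f := by
  funext X
  simp [contract, hf]

/- Basic facts about `urank`. -/
lemma urank_empty (F : Finset (Finset T)) : urank F (∅ : Finset T) = 0 := by
  have h : F.sup (fun B => ((∅ : Finset T) ∩ B).card) = 0 :=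
    le_antisymm (Finset.sup_le (fun B _ => by simp)) (Nat.zero_le _)
  simp [urank, h]

lemma le_urank (F : Finset (Finset T)) {M : Finset T} (hM : M ∈ F) (A : Finset T) :
    ((A ∩ M).card : ℝ) ≤ urank F A := by
  have h := Finset.le_sup (f := fun B => (A ∩ B).card) hM
  unfold urank
  exact_mod_cast h

lemma urank_le (F : Finset (Finset T)) (A : Finset T) {n : ℕ}
    (h : ∀ M ∈ F, (A ∩ M).card ≤ n) : urank F A ≤ (n : ℝ) := by
  have h2 := Finset.sup_le h
  unfold urank
  exact_mod_cast h2

/-- Exchange lemma: any independent set `M` can be transformed, by inserting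
all elements of an independent set `W` one by one (each insertion kicking out
at most `k` elements), into an independent set `P` with `W ⊆ P ⊆ W ∪ M` and
`|M| ≤ |P| + (k-1)|W \ M|`. -/
lemma exch_lemma {k : ℕ} {F : Finset (Finset T)}
    (hdc : DownwardClosed F) (hext : KExtendible k F) :
    ∀ (n : ℕ) (W M : Finset T), W ∈ F → M ∈ F → (W \ M).card ≤ n →
      ∃ P, P ∈ F ∧ W ⊆ P ∧ P ⊆ W ∪ M ∧
        M.card ≤ P.card + (k - 1) * (W \ M).card := by
  intro n
  induction n with
  | zero =>
    intro W M hWF hMF hc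
    have hWM : W ⊆ M := by
      rw [← Finset.sdiff_eq_empty_iff_subset]
      exact Finset.card_eq_zero.mp (Nat.le_antisymm hc (Nat.zero_le _))
    exact ⟨M, hMF, hWM, Finset.subset_union_right, Nat.le_add_right _ _⟩
  | succ n ihn =>
    intro W M hWF hMF hc
    by_cases hWM : W ⊆ M
    · exact ⟨M, hMF, hWM, Finset.subset_union_right, Nat.le_add_right _ _⟩
    · have hne : (W \ M).Nonempty := by rwa [Finset.sdiff_nonempty]
      obtain ⟨w, hw⟩ := hne
      have hwW : w ∈ W := (Finset.mem_sdiff.mp hw).1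
      have hwM : w ∉ M := (Finset.mem_sdiff.mp hw).2
      have hAe : (W ∩ M) ∪ {w} ∈ F := by
        refine hdc.2 W hWF _ ?_
        intro x hx
        rcases Finset.mem_union.mp hx with h | h
        · exact (Finset.mem_inter.mp h).1
        · rw [Finset.mem_singleton] at h; subst h; exact hwW
      obtain ⟨Z, hZsub, hZcard, hMZ⟩ :=
        hext (W ∩ M) M Finset.inter_subset_right hMF w hAe
      have hMZ' : insert w (M \ Z) ∈ F := by
        rwa [Finset.union_comm, ← Finset.insert_eq] at hMZ
      set M' := insert w (M \ Z) with hM'def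
      have hZM : Z ⊆ M := hZsub.trans Finset.sdiff_subset
      have hwMZ : w ∉ M \ Z := fun h => hwM (Finset.mem_sdiff.mp h).1
      have hcard1 : M'.card = (M \ Z).card + 1 := Finset.card_insert_of_notMem hwMZ
      have hcard2 : (M \ Z).card + Z.card = M.card :=
        Finset.card_sdiff_add_card_eq_card hZM
      have hsub' : W \ M' ⊆ (W \ M).erase w := by
        intro x hx
        have hxW : x ∈ W := (Finset.mem_sdiff.mp hx).1
        have hxM' : x ∉ M' := (Finset.mem_sdiff.mp hx).2
        have hxw : x ≠ w := fun h => hxM' (h ▸ Finset.mem_insert_self w _)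
        refine Finset.mem_erase.mpr ⟨hxw, Finset.mem_sdiff.mpr ⟨hxW, fun hxM => ?_⟩⟩
        have hxZ : x ∉ Z := fun hxZ =>
          (Finset.mem_sdiff.mp (hZsub hxZ)).2 (Finset.mem_inter.mpr ⟨hxW, hxM⟩)
        exact hxM' (Finset.mem_insert.mpr (Or.inr (Finset.mem_sdiff.mpr ⟨hxM, hxZ⟩)))
      have hcerase : ((W \ M).erase w).card = (W \ M).card - 1 :=
        Finset.card_erase_of_mem hw
      have hwpos : 1 ≤ (W \ M).card := Finset.card_pos.mpr ⟨w, hw⟩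
      have hc' : (W \ M').card ≤ n := by
        have := Finset.card_le_card hsub'
        omega
      obtain ⟨P, hPF, hWP, hPsub, hPcard⟩ := ihn W M' hWF hMZ' hc'
      refine ⟨P, hPF, hWP, ?_, ?_⟩
      · refine hPsub.trans (Finset.union_subset Finset.subset_union_left ?_)
        intro x hx
        rcases Finset.mem_insert.mp hx with h | h
        · subst h; exact Finset.mem_union_left _ hwW
        · exact Finset.mem_union_right _ (Finset.mem_sdiff.mp h).1
      · have h5 : (W \ M').card + 1 ≤ (W \ M).card := by
          have := Finset.card_le_card hsub'
          omega
        have hmul : (k - 1) * ((W \ M').card + 1) ≤ (k - 1) * (W \ M).card :=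
          Nat.mul_le_mul_left _ h5
        calc M.card = (M \ Z).card + Z.card := hcard2.symm
          _ ≤ (M \ Z).card + k := by omega
          _ ≤ M'.card + (k - 1) := by omega
          _ ≤ (P.card + (k - 1) * (W \ M').card) + (k - 1) := by
              exact Nat.add_le_add_right hPcard _
          _ = P.card + (k - 1) * ((W \ M').card + 1) := by ring
          _ ≤ P.card + (k - 1) * (W \ M).card := Nat.add_le_add_left hmul _

/-- If `W` is independent and every element of an independent set `M` outside
`W` cannot be added to `W`, then `|M| ≤ k |W|` (`k`-system property). -/
lemma blocked_card_le {k : ℕ} {F : Finset (Finset T)} (hk : 0 < k)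
    (hdc : DownwardClosed F) (hext : KExtendible k F)
    {W M : Finset T} (hWF : W ∈ F) (hMF : M ∈ F)
    (hb : ∀ x ∈ M, x ∉ W → insert x W ∉ F) : M.card ≤ k * W.card := by
  obtain ⟨P, hPF, hWP, hPsub, hPcard⟩ :=
    exch_lemma hdc hext (W \ M).card W M hWF hMF le_rfl
  have hPW : P ⊆ W := by
    intro x hx
    by_contra hxW
    have hxM : x ∈ M := by
      rcases Finset.mem_union.mp (hPsub hx) with h | h
      · exact absurd h hxW
      · exact h
    have hins : insert x W ∈ F :=
      hdc.2 P hPF _ (Finset.insert_subset hx hWP)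
    exact hb x hxM hxW hins
  have h1 : P.card ≤ W.card := Finset.card_le_card hPW
  have h2 : (W \ M).card ≤ W.card := Finset.card_le_card Finset.sdiff_subset
  have hk1 : 1 + (k - 1) = k := by omega
  calc M.card ≤ P.card + (k - 1) * (W \ M).card := hPcard
    _ ≤ W.card + (k - 1) * W.card := Nat.add_le_add h1 (Nat.mul_le_mul_left _ h2)
    _ = (1 + (k - 1)) * W.card := by ring
    _ = k * W.card := by rw [hk1]

/-- Rank version of the blocking bound. -/
lemma urank_le_blocked {k : ℕ} {F : Finset (Finset T)} (hk : 0 < k)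
    (hdc : DownwardClosed F) (hext : KExtendible k F)
    {W A : Finset T} (hWF : W ∈ F)
    (hb : ∀ x ∈ A, x ∉ W → insert x W ∉ F) :
    urank F A ≤ ((k * W.card : ℕ) : ℝ) := by
  refine urank_le F A ?_
  intro M hMF
  refine blocked_card_le hk hdc hext hWF (hdc.2 M hMF _ Finset.inter_subset_right) ?_
  intro x hx hxW
  exact hb x (Finset.mem_inter.mp hx).1 hxW

/-- Greedy update of the witness set. -/
noncomputable def addW (F : Finset (Finset T)) (W : Finset T) (r : T) : Finset T :=
  if r ∉ W ∧ insert r W ∈ F then insert r W else W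

/-- Greedy update of the set of counted ghost elements. -/
noncomputable def addV (F : Finset (Finset T)) (W V : Finset T) (r : T) : Finset T :=
  if r ∉ W ∧ insert r W ∈ F then insert r V else V

/-- Indicator of a successful greedy insertion. -/
noncomputable def chi (F : Finset (Finset T)) (W : Finset T) (r : T) : ℝ :=
  if r ∉ W ∧ insert r W ∈ F then 1 else 0

lemma subset_addW (F : Finset (Finset T)) (W : Finset T) (r : T) :
    W ⊆ addW F W r := by
  unfold addW; split_ifs with h
  · exact Finset.subset_insert _ _
  · exact Finset.Subset.refl _

lemma addW_mem {F : Finset (Finset T)} {W : Finset T} (hW : W ∈ F) (r : T) :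
    addW F W r ∈ F := by
  unfold addW; split_ifs with h
  · exact h.2
  · exact hW

lemma addW_card (F : Finset (Finset T)) (W : Finset T) (r : T) :
    ((addW F W r).card : ℝ) = (W.card : ℝ) + chi F W r := by
  unfold addW chi; split_ifs with h
  · rw [Finset.card_insert_of_notMem h.1]; push_cast; ring
  · ring

lemma addV_card (F : Finset (Finset T)) {W V : Finset T} (hVW : V ⊆ W) (r : T) :
    ((addV F W V r).card : ℝ) = (V.card : ℝ) + chi F W r := by
  unfold addV chi; split_ifs with h
  · have : r ∉ V := fun hrV => h.1 (hVW hrV)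
    rw [Finset.card_insert_of_notMem this]; push_cast; ring
  · ring

lemma addV_subset_addW (F : Finset (Finset T)) {W V : Finset T} (hVW : V ⊆ W) (r : T) :
    addV F W V r ⊆ addW F W r := by
  unfold addV addW; split_ifs with h
  · exact Finset.insert_subset_insert _ hVW
  · exact hVW

lemma addV_subset_union (F : Finset (Finset T)) {W V B : Finset T} (hVB : V ⊆ B) (r : T) :
    addV F W V r ⊆ B ∪ {r} := by
  unfold addV; split_ifs with h
  · refine Finset.insert_subset ?_ (hVB.trans Finset.subset_union_left)
    exact Finset.mem_union_right _ (Finset.mem_singleton_self r)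
  · exact hVB.trans Finset.subset_union_left

lemma chi_nonneg (F : Finset (Finset T)) (W : Finset T) (r : T) :
    0 ≤ chi F W r := by
  unfold chi; split_ifs <;> norm_num

lemma chi_le_one (F : Finset (Finset T)) (W : Finset T) (r : T) :
    chi F W r ≤ 1 := by
  unfold chi; split_ifs <;> norm_num

/-- Enlarging the witness set can only make insertion harder. -/
lemma chi_addW_le {F : Finset (Finset T)} (hdc : DownwardClosed F)
    (W : Finset T) (r i : T) :
    chi F (addW F W r) i ≤ chi F W i := by
  unfold chi
  split_ifs with h1 h2
  · exact le_rfl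
  · exfalso
    apply h2
    constructor
    · exact fun hiW => h1.1 (subset_addW F W r hiW)
    · exact hdc.2 _ h1.2 _ (Finset.insert_subset_insert _ (subset_addW F W r))
  · norm_num
  · exact le_rfl

/-- Blocking is preserved by the greedy update. -/
lemma block_addW {F : Finset (Finset T)} (hdc : DownwardClosed F)
    {W A' : Finset T} (hb : ∀ x ∈ A', x ∉ W → insert x W ∉ F) (r : T) :
    ∀ x ∈ A' ∪ {r}, x ∉ addW F W r → insert x (addW F W r) ∉ F := by
  intro x hx hxW' hins
  have hxW : x ∉ W := fun h => hxW' (subset_addW F W r h)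
  have hinsW : insert x W ∈ F :=
    hdc.2 _ hins _ (Finset.insert_subset_insert _ (subset_addW F W r))
  rcases Finset.mem_union.mp hx with h | h
  · exact hb x h hxW hinsW
  · rw [Finset.mem_singleton] at h; subst h
    apply hxW'
    unfold addW
    rw [if_pos ⟨hxW, hinsW⟩]
    exact Finset.mem_insert_self x W

end Aux

section Sums

variable {T : Type*} [Fintype T] [DecidableEq T]

lemma adap_leaf (f : Finset T → ℝ) : adap (DTree.leaf : DTree T) f = 0 := rfl

lemma adap_node (μ : T → ℝ) (c : T → DTree T) (f : Finset T → ℝ) :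
    adap (DTree.node μ c) f = ∑ t, μ t * (f {t} + adap (c t) (contract f {t})) := rfl

lemma alg_leaf (f : Finset T → ℝ) : alg (DTree.leaf : DTree T) f = 0 := rfl

lemma alg_node (μ : T → ℝ) (c : T → DTree T) (f : Finset T → ℝ) :
    alg (DTree.node μ c) f = ∑ i, ∑ r, μ i * μ r * (f {r} + alg (c i) (contract f {r})) := rfl

lemma helper1 (μ : T → ℝ) (hμ1 : ∑ t, μ t = 1) (c : ℝ) (g : T → ℝ) :
    c + ∑ t, μ t * (g t - c) = ∑ t, μ t * g t := by
  have h : ∀ t ∈ (univ : Finset T), μ t * (g t - c) = μ t * g t - μ t * c :=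
    fun t _ => by ring
  rw [Finset.sum_congr rfl h, Finset.sum_sub_distrib, ← Finset.sum_mul, hμ1]
  ring

lemma helper2 (μ : T → ℝ) (hμ1 : ∑ t, μ t = 1) (c : ℝ) (g : T → T → ℝ) :
    c + ∑ i, ∑ r, μ i * μ r * (g i r - c) = ∑ i, ∑ r, μ i * μ r * g i r := by
  have inner : ∀ i, ∑ r, μ i * μ r * (g i r - c)
      = (∑ r, μ i * μ r * g i r) - μ i * c := by
    intro i
    have h : ∀ r ∈ (univ : Finset T), μ i * μ r * (g i r - c)
        = μ i * μ r * g i r - (μ i * c) * μ r := fun r _ => by ring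
    rw [Finset.sum_congr rfl h, Finset.sum_sub_distrib, ← Finset.mul_sum, hμ1, mul_one]
  rw [Finset.sum_congr rfl fun i _ => inner i, Finset.sum_sub_distrib,
    ← Finset.sum_mul, hμ1, one_mul]
  ring

lemma helper3 (μ : T → ℝ) (hμ1 : ∑ t, μ t = 1) (g : T → ℝ) :
    ∑ i, ∑ r, μ i * μ r * g i = ∑ i, μ i * g i := by
  refine Finset.sum_congr rfl fun i _ => ?_
  have h : ∀ r ∈ (univ : Finset T), μ i * μ r * g i = (μ i * g i) * μ r :=
    fun r _ => by ring
  rw [Finset.sum_congr rfl h, ← Finset.mul_sum, hμ1, mul_one]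

lemma helper4 (μ : T → ℝ) (hμ1 : ∑ t, μ t = 1) (g : T → ℝ) :
    ∑ i, ∑ r, μ i * μ r * g r = ∑ r, μ r * g r := by
  have inner : ∀ i, ∑ r, μ i * μ r * g r = μ i * ∑ r, μ r * g r := by
    intro i
    have h : ∀ r ∈ (univ : Finset T), μ i * μ r * g r = μ i * (μ r * g r) :=
      fun r _ => by ring
    rw [Finset.sum_congr rfl h, ← Finset.mul_sum]
  rw [Finset.sum_congr rfl fun i _ => inner i, ← Finset.sum_mul, hμ1, one_mul]

lemma helper5 (μ : T → ℝ) (hμ1 : ∑ t, μ t = 1) :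
    ∑ i, ∑ r, μ i * μ r = (1 : ℝ) := by
  have inner : ∀ i, ∑ r, μ i * μ r = μ i := by
    intro i
    rw [← Finset.mul_sum, hμ1, mul_one]
  rw [Finset.sum_congr rfl fun i _ => inner i, hμ1]

lemma double_mul_sum (b : ℝ) (g : T → T → ℝ) :
    ∑ i, ∑ r, b * g i r = b * ∑ i, ∑ r, g i r := by
  calc ∑ i, ∑ r, b * g i r = ∑ i, b * ∑ r, g i r :=
        Finset.sum_congr rfl fun i _ => (Finset.mul_sum _ _ _).symm
    _ = b * ∑ i, ∑ r, g i r := (Finset.mul_sum _ _ _).symm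

end Sums

section KeyLemma

open Classical

variable {T : Type*} [Fintype T] [DecidableEq T]

/-- Main induction: for any valid decision tree and any state `(A, B, W, V)`
with `W ∈ F` an independent witness, `V ⊆ W` with `V ⊆ B`, and all elements of
`A ∪ B` outside `W` blocked from insertion into `W`, we have
`f(A) + adap(𝒯, f_A) ≤ k|W| − 2k|V| + 2k (f(B) + alg(𝒯, f_B))`. -/
lemma key_lemma (k : ℕ) (hk : 0 < k) (F : Finset (Finset T))
    (hdc : DownwardClosed F) (hext : KExtendible k F) :
    ∀ (𝒯 : DTree T), 𝒯.valid → ∀ A B W V : Finset T, W ∈ F → V ⊆ W → V ⊆ B →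
      (∀ x ∈ A ∪ B, x ∉ W → insert x W ∉ F) →
      urank F A + adap 𝒯 (contract (urank F) A)
        ≤ (k : ℝ) * W.card - 2 * k * V.card
          + 2 * k * (urank F B + alg 𝒯 (contract (urank F) B)) := by
  intro 𝒯
  induction 𝒯 with
  | leaf =>
    intro _ A B W V hWF hVW hVB hblock
    rw [adap_leaf, alg_leaf]
    have h1 : urank F A ≤ ((k * W.card : ℕ) : ℝ) :=
      urank_le_blocked hk hdc hext hWF
        (fun x hx hxW => hblock x (Finset.mem_union_left _ hx) hxW)
    have hVF : V ∈ F := hdc.2 W hWF V hVW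
    have h2 : ((V.card : ℕ) : ℝ) ≤ urank F B := by
      have := le_urank F hVF B
      rwa [Finset.inter_eq_right.mpr hVB] at this
    have hk' : (1 : ℝ) ≤ (k : ℝ) := by exact_mod_cast hk
    have h3 : 2 * (k : ℝ) * (V.card : ℝ) ≤ 2 * (k : ℝ) * urank F B := by
      apply mul_le_mul_of_nonneg_left h2
      linarith
    push_cast at h1
    linarith
  | node μ c ih =>
    intro hval A B W V hWF hVW hVB hblock
    obtain ⟨hμ0, hμ1, hcval⟩ := hval
    -- Normalize the adaptive side.
    have hL : urank F A + adap (DTree.node μ c) (contract (urank F) A)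
        = ∑ t, μ t * (urank F (A ∪ {t}) + adap (c t) (contract (urank F) (A ∪ {t}))) := by
      rw [adap_node]
      simp only [contract_contract, contract_apply]
      have e1 : ∀ t ∈ (univ : Finset T),
          μ t * (urank F (A ∪ {t}) - urank F A + adap (c t) (contract (urank F) (A ∪ {t})))
          = μ t * ((urank F (A ∪ {t}) + adap (c t) (contract (urank F) (A ∪ {t}))) - urank F A) :=
        fun t _ => by ring
      rw [Finset.sum_congr rfl e1]
      exact helper1 μ hμ1 (urank F A) _
    -- Normalize the non-adaptive side.
    have hR : urank F B + alg (DTree.node μ c) (contract (urank F) B)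
        = ∑ i, ∑ r, μ i * μ r *
            (urank F (B ∪ {r}) + alg (c i) (contract (urank F) (B ∪ {r}))) := by
      rw [alg_node]
      simp only [contract_contract, contract_apply]
      have e1 : ∀ i ∈ (univ : Finset T), ∀ r ∈ (univ : Finset T),
          μ i * μ r * (urank F (B ∪ {r}) - urank F B + alg (c i) (contract (urank F) (B ∪ {r})))
          = μ i * μ r * ((urank F (B ∪ {r}) + alg (c i) (contract (urank F) (B ∪ {r}))) - urank F B) :=
        fun i _ r _ => by ring
      rw [Finset.sum_congr rfl fun i hi => Finset.sum_congr rfl (e1 i hi)]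
      exact helper2 μ hμ1 (urank F B) _
    rw [hL, hR]
    -- Per-branch application of the induction hypothesis.
    have Hir : ∀ i r,
        urank F (A ∪ {i}) + adap (c i) (contract (urank F) (A ∪ {i}))
        ≤ (k : ℝ) * ((addW F (addW F W r) i).card) - 2 * k * ((addV F W V r).card)
          + 2 * k * (urank F (B ∪ {r}) + alg (c i) (contract (urank F) (B ∪ {r}))) := by
      intro i r
      apply ih i (hcval i) (A ∪ {i}) (B ∪ {r}) (addW F (addW F W r) i) (addV F W V r)
      · exact addW_mem (addW_mem hWF r) i
      · exact (addV_subset_addW F hVW r).trans (subset_addW F _ i)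
      · exact addV_subset_union F hVB r
      · -- blocking for the new state
        have hb1 : ∀ x ∈ (A ∪ B) ∪ {r}, x ∉ addW F W r → insert x (addW F W r) ∉ F :=
          block_addW hdc hblock r
        have hb2 : ∀ x ∈ ((A ∪ B) ∪ {r}) ∪ {i}, x ∉ addW F (addW F W r) i →
            insert x (addW F (addW F W r) i) ∉ F :=
          block_addW hdc hb1 i
        intro x hx hxW
        apply hb2 x ?_ hxW
        simp only [Finset.mem_union, Finset.mem_singleton] at hx ⊢
        tauto
    -- Rewrite the card bounds with indicators.
    have Hir' : ∀ i r,
        urank F (A ∪ {i}) + adap (c i) (contract (urank F) (A ∪ {i}))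
        ≤ ((k : ℝ) * W.card - 2 * k * V.card)
          + ((k : ℝ) * chi F (addW F W r) i - (k : ℝ) * chi F W r)
          + 2 * k * (urank F (B ∪ {r}) + alg (c i) (contract (urank F) (B ∪ {r}))) := by
      intro i r
      have h := Hir i r
      rw [addW_card, addW_card, addV_card F hVW] at h
      calc urank F (A ∪ {i}) + adap (c i) (contract (urank F) (A ∪ {i}))
          ≤ (k : ℝ) * (((W.card : ℝ) + chi F W r) + chi F (addW F W r) i)
            - 2 * k * ((V.card : ℝ) + chi F W r)
            + 2 * k * (urank F (B ∪ {r}) + alg (c i) (contract (urank F) (B ∪ {r}))) := h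
        _ = ((k : ℝ) * W.card - 2 * k * V.card)
            + ((k : ℝ) * chi F (addW F W r) i - (k : ℝ) * chi F W r)
            + 2 * k * (urank F (B ∪ {r}) + alg (c i) (contract (urank F) (B ∪ {r}))) := by
          ring
    -- Sum up.
    set C : ℝ := (k : ℝ) * W.card - 2 * k * V.card with hC
    set Y : T → T → ℝ := fun i r =>
      urank F (B ∪ {r}) + alg (c i) (contract (urank F) (B ∪ {r})) with hY
    set X : T → ℝ := fun i =>
      urank F (A ∪ {i}) + adap (c i) (contract (urank F) (A ∪ {i})) with hX
    have hμμ : ∀ i r, 0 ≤ μ i * μ r := fun i r => mul_nonneg (hμ0 i) (hμ0 r)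
    have step1 : ∑ i, μ i * X i = ∑ i, ∑ r, μ i * μ r * X i := (helper3 μ hμ1 X).symm
    have step2 : ∑ i, ∑ r, μ i * μ r * X i
        ≤ ∑ i, ∑ r, μ i * μ r *
            (C + ((k : ℝ) * chi F (addW F W r) i - (k : ℝ) * chi F W r) + 2 * k * Y i r) := by
      refine Finset.sum_le_sum fun i _ => Finset.sum_le_sum fun r _ => ?_
      exact mul_le_mul_of_nonneg_left (Hir' i r) (hμμ i r)
    have split : ∑ i, ∑ r, μ i * μ r *
          (C + ((k : ℝ) * chi F (addW F W r) i - (k : ℝ) * chi F W r) + 2 * k * Y i r)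
        = (∑ i, ∑ r, μ i * μ r * C)
          + (k : ℝ) * (∑ i, ∑ r, μ i * μ r * chi F (addW F W r) i)
          - (k : ℝ) * (∑ i, ∑ r, μ i * μ r * chi F W r)
          + 2 * k * (∑ i, ∑ r, μ i * μ r * Y i r) := by
      have e : ∀ i ∈ (univ : Finset T), ∀ r ∈ (univ : Finset T),
          μ i * μ r * (C + ((k : ℝ) * chi F (addW F W r) i - (k : ℝ) * chi F W r) + 2 * k * Y i r)
          = μ i * μ r * C + (k : ℝ) * (μ i * μ r * chi F (addW F W r) i)
            - (k : ℝ) * (μ i * μ r * chi F W r) + 2 * k * (μ i * μ r * Y i r) :=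
        fun i _ r _ => by ring
      rw [Finset.sum_congr rfl fun i hi => Finset.sum_congr rfl (e i hi)]
      rw [show ∀ (a b c d : T → T → ℝ),
        (∑ i, ∑ r, (a i r + b i r - c i r + d i r))
        = (∑ i, ∑ r, a i r) + (∑ i, ∑ r, b i r) - (∑ i, ∑ r, c i r) + (∑ i, ∑ r, d i r) from
        fun a b c d => by
          simp only [Finset.sum_add_distrib, Finset.sum_sub_distrib]]
      rw [double_mul_sum ((k : ℝ)) (fun i r => μ i * μ r * chi F (addW F W r) i),
        double_mul_sum ((k : ℝ)) (fun i r => μ i * μ r * chi F W r),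
        double_mul_sum (2 * (k : ℝ)) (fun i r => μ i * μ r * Y i r)]
    have sumC : ∑ i, ∑ r, μ i * μ r * C = C := by
      rw [helper4 μ hμ1 (fun _ => C), ← Finset.sum_mul, hμ1, one_mul]
    have hchi : ∑ i, ∑ r, μ i * μ r * chi F (addW F W r) i
        ≤ ∑ i, ∑ r, μ i * μ r * chi F W r := by
      calc ∑ i, ∑ r, μ i * μ r * chi F (addW F W r) i
          ≤ ∑ i, ∑ r, μ i * μ r * chi F W i := by
            refine Finset.sum_le_sum fun i _ => Finset.sum_le_sum fun r _ => ?_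
            exact mul_le_mul_of_nonneg_left (chi_addW_le hdc W r i) (hμμ i r)
        _ = ∑ i, μ i * chi F W i := helper3 μ hμ1 _
        _ = ∑ r, μ r * chi F W r := rfl
        _ = ∑ i, ∑ r, μ i * μ r * chi F W r := (helper4 μ hμ1 _).symm
    have hkpos : (0 : ℝ) ≤ (k : ℝ) := Nat.cast_nonneg k
    calc ∑ i, μ i * X i
        = ∑ i, ∑ r, μ i * μ r * X i := step1
      _ ≤ ∑ i, ∑ r, μ i * μ r *
            (C + ((k : ℝ) * chi F (addW F W r) i - (k : ℝ) * chi F W r) + 2 * k * Y i r) := step2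
      _ = (∑ i, ∑ r, μ i * μ r * C)
          + (k : ℝ) * (∑ i, ∑ r, μ i * μ r * chi F (addW F W r) i)
          - (k : ℝ) * (∑ i, ∑ r, μ i * μ r * chi F W r)
          + 2 * k * (∑ i, ∑ r, μ i * μ r * Y i r) := split
      _ ≤ C + 2 * k * (∑ i, ∑ r, μ i * μ r * Y i r) := by
          have := mul_le_mul_of_nonneg_left hchi hkpos
          rw [sumC]
          linarith
      _ = (k : ℝ) * W.card - 2 * k * V.card + 2 * k * (∑ i, ∑ r, μ i * μ r * Y i r) := by
          rw [hC]

end KeyLemma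

/-- Theorem 4.1: for the unweighted rank function of a downward-closed
`k`-extendible system, `adap(𝒯, f) ≤ 2k · alg(𝒯, f)`. -/
theorem kExtendible_unweighted_adaptivity_gap_le
    {T : Type*} [Fintype T] [DecidableEq T]
    (k : ℕ) (hk : 0 < k) (F : Finset (Finset T))
    (hdc : DownwardClosed F) (hext : KExtendible k F)
    (𝒯 : DTree T) (h𝒯 : 𝒯.valid) :
    adap 𝒯 (urank F) ≤ (2 * k : ℝ) * alg 𝒯 (urank F) := by
  have h := key_lemma k hk F hdc hext 𝒯 h𝒯 ∅ ∅ ∅ ∅ hdc.1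
    (Finset.Subset.refl _) (Finset.Subset.refl _)
    (by intro x hx; simp at hx)
  rw [contract_empty (urank F) (urank_empty F), urank_empty] at h
  simp only [Finset.card_empty, Nat.cast_zero] at h
  linarith
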